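/- (Weyl equidistribution for multidimensional orbits, continuous case) Let Φ : ℝⁿ → ℝᴺ be linear such that no nonzero integral vector is orthogonal to Φ(ℝⁿ), let f : 𝕋ᴺ → ℂ be continuous, let φ₀ ∈ 𝕋ᴺ, and let Ω ⊆ ℝⁿ be a bounded measurable set of positive volume. Then (1/Vol(λΩ)) ∫_{λΩ} f(φ₀ + Φ(x)) dx → ∫_{𝕋ᴺ} f(φ) dφ as λ → ∞, where the integral on the right is with respect to normalized Haar measure on 𝕋ᴺ. -/

import Mathlib

open MeasureTheory Filter
open scoped Pointwise

namespace WeylAux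

open Complex
open scoped FourierTransform Real

noncomputable section

lemma circle_int (m : ℤ) :
    ∫ φ : AddCircle (1:ℝ), (fourier m φ : ℂ) = if m = 0 then 1 else 0 := by
  haveI : Fact ((0:ℝ) < 1) := ⟨one_pos⟩
  split_ifs with h
  · subst h
    simp only [fourier_zero]
    simp [AddCircle.measure_univ, Measure.real]
  · exact integral_eq_zero_of_add_right_eq_neg (fourier_add_half_inv_index h one_pos)

lemma torus_int (N : ℕ) (k : Fin N → ℤ) :
    ∫ φ : Fin N → AddCircle (1:ℝ), ∏ i, (fourier (k i) (φ i) : ℂ)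
      = if k = 0 then 1 else 0 := by
  haveI : Fact ((0:ℝ) < 1) := ⟨one_pos⟩
  rw [volume_pi, MeasureTheory.integral_fintype_prod_eq_prod (fun i x => (fourier (k i) x : ℂ))]
  simp_rw [circle_int]
  by_cases hk : k = 0
  · subst hk; simp
  · rw [if_neg hk]
    obtain ⟨i, hi⟩ : ∃ i, k i ≠ 0 := by
      by_contra h; push_neg at h; exact hk (funext h)
    exact Finset.prod_eq_zero (Finset.mem_univ i) (by simp [hi])

lemma rl {n : ℕ} (Ω : Set (Fin n → ℝ)) (hΩm : MeasurableSet Ω)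
    (L : (Fin n → ℝ) →L[ℝ] ℝ) (hL : L ≠ 0) :
    Tendsto (fun lam : ℝ => ∫ x in Ω, Complex.exp (2 * π * Complex.I * (lam * L x)))
      atTop (nhds 0) := by
  have key := tendsto_integral_exp_smul_cocompact
    (Ω.indicator fun _ => (1:ℂ)) (volume : Measure (Fin n → ℝ))
  have hcomp : Tendsto (fun lam : ℝ => (-lam) • L) atTop
      (cocompact ((Fin n → ℝ) →L[ℝ] ℝ)) := by
    rw [← Metric.cobounded_eq_cocompact, ← tendsto_norm_atTop_iff_cobounded]
    have hL' : 0 < ‖L‖ := norm_pos_iff.2 hL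
    have : (fun lam : ℝ => ‖(-lam) • L‖) = fun lam : ℝ => |lam| * ‖L‖ := by
      funext lam
      have h := norm_smul (-lam) L
      rw [norm_neg, Real.norm_eq_abs] at h
      exact h
    rw [this]
    exact Tendsto.atTop_mul_const hL' tendsto_abs_atTop_atTop
  refine ((key.comp hcomp).congr fun lam => ?_)
  rw [← integral_indicator hΩm]
  simp only [Function.comp_apply]
  refine integral_congr_ae (Filter.Eventually.of_forall fun v => ?_)
  classical
  simp only [ContinuousLinearMap.smul_apply, ContinuousLinearMap.neg_apply,
    Set.indicator_apply]
  split_ifs with hv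
  · rw [Circle.smul_def, Real.fourierChar_apply, smul_eq_mul, mul_one]
    congr 1
    push_cast [smul_eq_mul]
    ring
  · simp

variable {N : ℕ}

/-- Character on the torus. -/
def chi (k : Fin N → ℤ) : C((Fin N → AddCircle (1:ℝ)), ℂ) :=
  ⟨fun φ => ∏ i, (fourier (k i) (φ i) : ℂ), by
    refine continuous_finset_prod _ fun i _ => ?_
    exact (fourier (k i)).continuous.comp (continuous_apply i)⟩

lemma chi_apply (k : Fin N → ℤ) (φ : Fin N → AddCircle (1:ℝ)) :
    chi k φ = ∏ i, (fourier (k i) (φ i) : ℂ) := rfl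

lemma chi_zero : (chi (0 : Fin N → ℤ)) = 1 := by
  ext φ
  simp [chi_apply, fourier_zero]

lemma chi_mul (k l : Fin N → ℤ) : chi k * chi l = chi (k + l) := by
  ext φ
  simp only [ContinuousMap.mul_apply, chi_apply, ← Finset.prod_mul_distrib, Pi.add_apply,
    fourier_add]

lemma chi_star (k : Fin N → ℤ) : star (chi k) = chi (-k) := by
  ext φ
  simp only [ContinuousMap.star_apply, chi_apply, star_prod, Pi.neg_apply, fourier_neg]
  rfl

/-- The span of the characters. -/
def charSpan (N : ℕ) : Submodule ℂ C((Fin N → AddCircle (1:ℝ)), ℂ) :=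
  Submodule.span ℂ (Set.range (chi (N := N)))

lemma mul_mem_charSpan {g h : C((Fin N → AddCircle (1:ℝ)), ℂ)}
    (hg : g ∈ charSpan N) (hh : h ∈ charSpan N) : g * h ∈ charSpan N := by
  induction hg using Submodule.span_induction with
  | mem x hx =>
    induction hh using Submodule.span_induction with
    | mem y hy =>
      obtain ⟨k, rfl⟩ := hx
      obtain ⟨l, rfl⟩ := hy
      rw [chi_mul]
      exact Submodule.subset_span ⟨k + l, rfl⟩
    | zero => simp only [mul_zero]; exact (charSpan N).zero_mem
    | add y z _ _ hy hz => rw [mul_add]; exact (charSpan N).add_mem hy hz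
    | smul a y _ hy => rw [mul_smul_comm]; exact (charSpan N).smul_mem a hy
  | zero => simp only [zero_mul]; exact (charSpan N).zero_mem
  | add x y _ _ hx hy => rw [add_mul]; exact (charSpan N).add_mem hx hy
  | smul a x _ hx => rw [smul_mul_assoc]; exact (charSpan N).smul_mem a hx

lemma star_mem_charSpan {g : C((Fin N → AddCircle (1:ℝ)), ℂ)}
    (hg : g ∈ charSpan N) : star g ∈ charSpan N := by
  induction hg using Submodule.span_induction with
  | mem x hx =>
    obtain ⟨k, rfl⟩ := hx
    rw [chi_star]
    exact Submodule.subset_span ⟨-k, rfl⟩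
  | zero => simp only [star_zero]; exact (charSpan N).zero_mem
  | add x y _ _ hx hy => rw [star_add]; exact (charSpan N).add_mem hx hy
  | smul a x _ hx => rw [star_smul]; exact (charSpan N).smul_mem _ hx

/-- The star subalgebra of trigonometric polynomials. -/
def charAlg (N : ℕ) : StarSubalgebra ℂ C((Fin N → AddCircle (1:ℝ)), ℂ) where
  toSubalgebra := (charSpan N).toSubalgebra
    (by rw [← chi_zero]; exact Submodule.subset_span ⟨0, rfl⟩)
    (fun _ _ hx hy => mul_mem_charSpan hx hy)
  star_mem' := fun hx => star_mem_charSpan hx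

lemma charAlg_separates : (charAlg N).SeparatesPoints := by
  intro φ ψ hne
  obtain ⟨i, hi⟩ := Function.ne_iff.1 hne
  refine ⟨_, ⟨chi (Pi.single i 1), Submodule.subset_span ⟨_, rfl⟩, rfl⟩, ?_⟩
  have hval : ∀ ρ : Fin N → AddCircle (1:ℝ), chi (Pi.single i 1) ρ = AddCircle.toCircle (ρ i) := by
    intro ρ
    rw [chi_apply]
    rw [Finset.prod_eq_single_of_mem i (Finset.mem_univ i)]
    · simp [Pi.single_eq_same, fourier_one]
    · intro j _ hj
      simp [Pi.single_eq_of_ne hj, fourier_zero]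
  simp only [hval]
  intro h
  have h2 : AddCircle.toCircle (φ i) = AddCircle.toCircle (ψ i) := by
    exact Circle.coe_injective h
  exact hi (AddCircle.injective_toCircle one_ne_zero h2)

lemma mem_closure_charSpan (f : C((Fin N → AddCircle (1:ℝ)), ℂ)) :
    f ∈ closure ((charSpan N : Set C((Fin N → AddCircle (1:ℝ)), ℂ))) := by
  haveI : Fact ((0:ℝ) < 1) := ⟨one_pos⟩
  have hSW := ContinuousMap.starSubalgebra_topologicalClosure_eq_top_of_separatesPoints
    (charAlg N) charAlg_separates
  have : f ∈ (charAlg N).topologicalClosure := by rw [hSW]; trivial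
  exact this

lemma fourier_shift (m : ℤ) (x : AddCircle (1:ℝ)) (r : ℝ) :
    (fourier m (x + (r : AddCircle (1:ℝ))) : ℂ)
      = fourier m x * Complex.exp (2 * π * Complex.I * ((m : ℝ) * r)) := by
  rw [fourier_apply, smul_add, AddCircle.toCircle_add, Circle.coe_mul, ← fourier_apply,
    fourier_coe_apply']
  congr 2
  push_cast
  ring

lemma chi_shift (k : Fin N → ℤ) (φ₀ : Fin N → AddCircle (1:ℝ)) (r : Fin N → ℝ) :
    chi k (fun i => φ₀ i + ((r i : ℝ) : AddCircle (1:ℝ)))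
      = chi k φ₀ * Complex.exp (2 * π * Complex.I * (∑ i, (k i : ℝ) * r i)) := by
  simp only [chi_apply]
  rw [Finset.prod_congr rfl fun i _ => fourier_shift (k i) (φ₀ i) (r i),
    Finset.prod_mul_distrib, ← Complex.exp_sum]
  congr 1
  push_cast
  rw [Finset.mul_sum]

end

end WeylAux

open WeylAux
open scoped Real

/-- Weyl equidistribution for multidimensional orbits, continuous case: the averages of a
continuous function over dilates λΩ along the orbit converge to the space average over 𝕋ᴺ. -/
theorem weyl_equidistribution_continuous (n N : ℕ)
    (Φ : (Fin n → ℝ) →ₗ[ℝ] (Fin N → ℝ))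
    (hΦ : ∀ k : Fin N → ℤ, (∀ x : Fin n → ℝ, ∑ i, (k i : ℝ) * Φ x i = 0) → k = 0)
    (f : (Fin N → AddCircle (1 : ℝ)) → ℂ) (hf : Continuous f)
    (φ₀ : Fin N → AddCircle (1 : ℝ))
    (Ω : Set (Fin n → ℝ)) (hΩm : MeasurableSet Ω) (hΩb : Bornology.IsBounded Ω)
    (hΩv : 0 < volume Ω) :
    Tendsto (fun lam : ℝ =>
        ((volume (lam • Ω)).toReal)⁻¹ •
          ∫ x in lam • Ω, f (fun i => φ₀ i + ((Φ x i : ℝ) : AddCircle (1 : ℝ))))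
      atTop (nhds (∫ φ, f φ)) := by
  classical
  haveI hfact : Fact ((0:ℝ) < 1) := ⟨one_pos⟩
  haveI : IsProbabilityMeasure (volume : Measure (AddCircle (1:ℝ))) :=
    ⟨by rw [AddCircle.measure_univ]; norm_num⟩
  haveI hPX : IsProbabilityMeasure (volume : Measure (Fin N → AddCircle (1:ℝ))) := by
    constructor
    rw [volume_pi, Measure.pi_univ]
    simp
  have hΩfin : volume Ω < ⊤ := hΩb.measure_lt_top
  haveI : Fact (volume Ω < ⊤) := ⟨hΩfin⟩
  set c : ℝ := (volume Ω).toReal with hc_def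
  have hc : 0 < c := ENNReal.toReal_pos hΩv.ne' hΩfin.ne
  have hΦc : Continuous Φ := Φ.continuous_of_finiteDimensional
  set orb : ℝ → (Fin n → ℝ) → (Fin N → AddCircle (1:ℝ)) :=
    fun lam y i => φ₀ i + ((Φ (lam • y) i : ℝ) : AddCircle (1:ℝ)) with horb_def
  have horbc : ∀ lam : ℝ, Continuous (orb lam) := by
    intro lam
    refine continuous_pi fun i => continuous_const.add ?_
    exact (AddCircle.continuous_mk' 1).comp
      ((continuous_apply i).comp (hΦc.comp (continuous_const_smul lam)))
  have hint : ∀ (lam : ℝ) (g : C((Fin N → AddCircle (1:ℝ)), ℂ)),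
      Integrable (fun y => g (orb lam y)) (volume.restrict Ω) := by
    intro lam g
    refine (integrable_const ‖g‖).mono'
      ((g.continuous.comp (horbc lam)).aestronglyMeasurable) ?_
    exact Filter.Eventually.of_forall fun y => g.norm_coe_le_norm _
  have hintT : ∀ g : C((Fin N → AddCircle (1:ℝ)), ℂ),
      Integrable (⇑g) (volume : Measure (Fin N → AddCircle (1:ℝ))) := by
    intro g
    refine (integrable_const ‖g‖).mono' g.continuous.aestronglyMeasurable ?_
    exact Filter.Eventually.of_forall fun φ => g.norm_coe_le_norm _
  -- Step 1: the result for characters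
  have hchar : ∀ k : Fin N → ℤ,
      Tendsto (fun lam : ℝ => c⁻¹ • ∫ y in Ω, chi k (orb lam y)) atTop
        (nhds (∫ φ, chi k φ)) := by
    intro k
    rcases eq_or_ne k 0 with rfl | hk
    · have hone : ∀ φ : Fin N → AddCircle (1:ℝ), chi (0 : Fin N → ℤ) φ = 1 := fun φ => by
        rw [chi_zero]; rfl
      have h1 : (fun lam : ℝ => c⁻¹ • ∫ y in Ω, chi (0 : Fin N → ℤ) (orb lam y))
          = fun _ : ℝ => c⁻¹ • (c • (1:ℂ)) := by
        funext lam
        simp only [hone]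
        rw [setIntegral_const]
        rfl
      have h2 : (∫ φ, chi (0 : Fin N → ℤ) φ) = 1 := by
        simp only [hone]
        simp
      rw [h2, h1]
      have h3 : c⁻¹ • (c • (1:ℂ)) = 1 := by
        rw [smul_smul, inv_mul_cancel₀ hc.ne', one_smul]
      rw [h3]
      exact tendsto_const_nhds
    · -- nonzero frequency
      let ℓ : (Fin n → ℝ) →ₗ[ℝ] ℝ :=
        { toFun := fun y => ∑ i, (k i : ℝ) * Φ y i
          map_add' := fun a b => by
            simp only [map_add, Pi.add_apply, mul_add]
            exact Finset.sum_add_distrib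
          map_smul' := fun m a => by
            simp only [_root_.map_smul, Pi.smul_apply, smul_eq_mul, RingHom.id_apply, Finset.mul_sum]
            exact Finset.sum_congr rfl fun i _ => by ring }
      let L : (Fin n → ℝ) →L[ℝ] ℝ := LinearMap.toContinuousLinearMap ℓ
      have hLapp : ∀ y, L y = ∑ i, (k i : ℝ) * Φ y i := fun y => rfl
      have hL : L ≠ 0 := by
        intro h
        refine hk (hΦ k fun y => ?_)
        have : L y = 0 := by rw [h]; rfl
        rwa [hLapp] at this
      have hrl := rl Ω hΩm L hL
      have hpoint : ∀ (lam : ℝ) (y : Fin n → ℝ),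
          chi k (orb lam y)
            = chi k φ₀ * Complex.exp (2 * π * Complex.I * ((lam : ℂ) * (L y : ℂ))) := by
        intro lam y
        have h1 := chi_shift k φ₀ (fun i => Φ (lam • y) i)
        have h2 : ((∑ i, (k i : ℝ) * Φ (lam • y) i : ℝ) : ℂ) = (lam : ℂ) * (L y : ℂ) := by
          have h3 : (∑ i, (k i : ℝ) * Φ (lam • y) i) = lam * L y := by
            rw [hLapp]
            have h4 : Φ (lam • y) = lam • Φ y := Φ.map_smul lam y
            rw [h4, Finset.mul_sum]
            exact Finset.sum_congr rfl fun i _ => by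
              simp only [Pi.smul_apply, smul_eq_mul]; ring
          rw [h3]
          push_cast
          ring
        rw [horb_def]
        simpa only [h2] using h1
      have heq : ∀ lam : ℝ, (c⁻¹ • ∫ y in Ω, chi k (orb lam y))
          = c⁻¹ • (chi k φ₀ * ∫ y in Ω, Complex.exp (2 * π * Complex.I * (lam * L y))) := by
        intro lam
        congr 1
        rw [← integral_const_mul]
        exact integral_congr_ae (Filter.Eventually.of_forall fun y => hpoint lam y)
      have hT : (∫ φ, chi k φ) = 0 := by
        have := torus_int N k
        rw [if_neg hk] at this
        simpa only [chi_apply] using this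
      rw [hT]
      have hlim : Tendsto (fun lam : ℝ => c⁻¹ • (chi k φ₀ *
          ∫ y in Ω, Complex.exp (2 * π * Complex.I * (lam * L y)))) atTop (nhds 0) := by
        have h5 := (hrl.const_mul (chi k φ₀)).const_smul (c⁻¹)
        simpa using h5
      exact Tendsto.congr (fun lam => (heq lam).symm) hlim
  -- Step 2: the result for the span of characters
  have hspan : ∀ g ∈ charSpan N,
      Tendsto (fun lam : ℝ => c⁻¹ • ∫ y in Ω, g (orb lam y)) atTop (nhds (∫ φ, g φ)) := by
    intro g hg
    induction hg using Submodule.span_induction with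
    | mem x hx => obtain ⟨k, rfl⟩ := hx; exact hchar k
    | zero =>
      simp only [ContinuousMap.zero_apply, integral_zero, smul_zero]
      exact tendsto_const_nhds
    | add x y hx hy ihx ihy =>
      have hsum : ∀ lam : ℝ, (c⁻¹ • ∫ y' in Ω, (x + y) (orb lam y'))
          = (c⁻¹ • ∫ y' in Ω, x (orb lam y')) + (c⁻¹ • ∫ y' in Ω, y (orb lam y')) := by
        intro lam
        rw [← smul_add, ← integral_add (hint lam x) (hint lam y)]
        simp only [ContinuousMap.add_apply]
      have hsumT : (∫ φ, (x + y) φ) = (∫ φ, x φ) + ∫ φ, y φ := by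
        rw [← integral_add (hintT x) (hintT y)]
        simp only [ContinuousMap.add_apply]
      rw [hsumT]
      exact Tendsto.congr (fun lam => (hsum lam).symm) (ihx.add ihy)
    | smul a x hx ihx =>
      have hsm : ∀ lam : ℝ, (c⁻¹ • ∫ y' in Ω, (a • x) (orb lam y'))
          = a • (c⁻¹ • ∫ y' in Ω, x (orb lam y')) := by
        intro lam
        rw [smul_comm]
        congr 1
        rw [← integral_smul]
        simp only [ContinuousMap.smul_apply]
      have hsmT : (∫ φ, (a • x) φ) = a • ∫ φ, x φ := by
        rw [← integral_smul]
        simp only [ContinuousMap.smul_apply]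
      rw [hsmT]
      exact Tendsto.congr (fun lam => (hsm lam).symm) (ihx.const_smul a)
  -- Step 3: rescaling, for positive λ
  set fc : C((Fin N → AddCircle (1:ℝ)), ℂ) := ⟨f, hf⟩ with hfc
  have havg : ∀ lam : ℝ, 0 < lam →
      ((volume (lam • Ω)).toReal)⁻¹ •
          (∫ x in lam • Ω, f (fun i => φ₀ i + ((Φ x i : ℝ) : AddCircle (1:ℝ))))
        = c⁻¹ • ∫ y in Ω, f (orb lam y) := by
    intro lam hlam
    have hvol : volume (lam • Ω) = ENNReal.ofReal (lam ^ n) * volume Ω := by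
      rw [Measure.addHaar_smul_of_nonneg volume hlam.le Ω, Module.finrank_fin_fun]
    have hcv : (∫ y in Ω, f (orb lam y)) = (lam ^ n)⁻¹ •
        ∫ x in lam • Ω, f (fun i => φ₀ i + ((Φ x i : ℝ) : AddCircle (1:ℝ))) := by
      have h6 := Measure.setIntegral_comp_smul_of_pos volume
        (fun x => f (fun i => φ₀ i + ((Φ x i : ℝ) : AddCircle (1:ℝ)))) Ω hlam
      rw [Module.finrank_fin_fun] at h6
      exact h6
    rw [hcv, hvol, ENNReal.toReal_mul, ENNReal.toReal_ofReal (by positivity), smul_smul]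
    congr 1
    rw [mul_inv]
    rw [← hc_def]
    field_simp
  -- Step 4: approximation argument
  have hmain' : Tendsto (fun lam : ℝ => c⁻¹ • ∫ y in Ω, f (orb lam y)) atTop
      (nhds (∫ φ, f φ)) := by
    rw [Metric.tendsto_nhds]
    intro ε hε
    obtain ⟨g, hgM, hgd⟩ := Metric.mem_closure_iff.1 (mem_closure_charSpan fc) (ε/3)
      (by positivity)
    have hg3 : ∀ φ : Fin N → AddCircle (1:ℝ), ‖f φ - g φ‖ ≤ dist fc g := by
      intro φ
      have h7 := ContinuousMap.norm_coe_le_norm (fc - g) φ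
      simp only [ContinuousMap.sub_apply, dist_eq_norm] at h7 ⊢; exact h7
    have h2 := Metric.tendsto_nhds.1 (hspan g hgM) (ε/3) (by positivity)
    filter_upwards [h2] with lam hlam
    have d1 : dist (c⁻¹ • ∫ y in Ω, f (orb lam y)) (c⁻¹ • ∫ y in Ω, g (orb lam y)) < ε/3 := by
      have hAB : (∫ y in Ω, f (orb lam y)) - ∫ y in Ω, g (orb lam y)
          = ∫ y in Ω, (f (orb lam y) - g (orb lam y)) :=
        (integral_sub (hint lam fc) (hint lam g)).symm
      have hbound : ‖∫ y in Ω, (f (orb lam y) - g (orb lam y))‖ ≤ dist fc g * c := by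
        exact norm_setIntegral_le_of_norm_le_const hΩfin (fun y _ => hg3 (orb lam y))
      rw [dist_smul₀, dist_eq_norm, hAB]
      have h8 : ‖(c : ℝ)⁻¹‖ = c⁻¹ := by
        rw [Real.norm_eq_abs, abs_of_pos (inv_pos.2 hc)]
      rw [h8]
      calc c⁻¹ * ‖∫ y in Ω, (f (orb lam y) - g (orb lam y))‖
          ≤ c⁻¹ * (dist fc g * c) := by
            exact mul_le_mul_of_nonneg_left hbound (inv_nonneg.2 hc.le)
        _ = dist fc g := by field_simp
        _ < ε/3 := hgd
    have d3 : dist (∫ φ, g φ) (∫ φ, f φ) < ε/3 := by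
      have hfcoe : ⇑fc = f := rfl
      rw [dist_eq_norm, ← hfcoe, ← integral_sub (hintT g) (hintT fc)]
      have h9 : ‖∫ φ, (g φ - fc φ)‖ ≤ dist fc g *
          (volume (Set.univ : Set (Fin N → AddCircle (1:ℝ)))).toReal := by
        refine norm_integral_le_of_norm_le_const ?_
        exact Filter.Eventually.of_forall fun φ => by
          rw [norm_sub_rev]; exact hg3 φ
      rw [measure_univ] at h9
      simp only [ENNReal.toReal_one, mul_one] at h9
      calc ‖∫ φ, (g φ - fc φ)‖ ≤ dist fc g := h9
        _ < ε/3 := hgd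
    calc dist (c⁻¹ • ∫ y in Ω, f (orb lam y)) (∫ φ, f φ)
        ≤ dist (c⁻¹ • ∫ y in Ω, f (orb lam y)) (c⁻¹ • ∫ y in Ω, g (orb lam y))
          + dist (c⁻¹ • ∫ y in Ω, g (orb lam y)) (∫ φ, g φ)
          + dist (∫ φ, g φ) (∫ φ, f φ) := dist_triangle4 _ _ _ _
      _ < ε/3 + ε/3 + ε/3 := by
          apply add_lt_add (add_lt_add d1 hlam) d3
      _ = ε := by ring
  refine Tendsto.congr' ?_ hmain'
  filter_upwards [eventually_gt_atTop (0:ℝ)] with lam hlam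
  exact (havg lam hlam).symm
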